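/- Consider the game G' used in the NP-hardness construction, built from a bipartite graph Γ = (A ∪ B, E) and parameter k ≥ 2: both players have action set A ∪ B ∪ {OO}, with payoffs u(OO,OO)=(0,0), u(OO,v)=(1,−1) and u(v,OO)=(−1,1) for v ≠ OO, u(a,b)=(1,1) if (a,b) ∈ E and (0,0) otherwise for a∈A, b∈B, u(a,a)=(−k,k) and u(a,a')=(0,0) for a≠a' in A, u(b,b)=(k,−k) and u(b,b')=(0,0) for b≠b' in B, and u(b,a)=(0,0) for b∈B, a∈A. If A' ⊆ A and B' ⊆ B with |A'| = |B'| = k induce a complete bipartite subgraph of Γ, then the profile where player 1 mixes uniformly over A' and player 2 mixes uniformly over B' is a Nash equilibrium with payoffs (1,1). -/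

import Mathlib

open Finset

noncomputable section

/-- Actions of the hardness game: a vertex of A, a vertex of B, or Opt Out. -/
abbrev Act (A B : Type*) := Sum A (Sum B Unit)

variable {A B : Type*} [Fintype A] [Fintype B] [DecidableEq A] [DecidableEq B]

/-- Player 1's payoffs in the hardness game G' built from bipartite graph E and
    parameter k. -/
def hg1 (E : A → B → Bool) (k : ℕ) : Act A B → Act A B → ℝ
  | Sum.inl a, Sum.inl a' => if a = a' then -(k : ℝ) else 0
  | Sum.inl a, Sum.inr (Sum.inl b) => if E a b then 1 else 0
  | Sum.inl _, Sum.inr (Sum.inr _) => -1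
  | Sum.inr (Sum.inl _), Sum.inl _ => 0
  | Sum.inr (Sum.inl b), Sum.inr (Sum.inl b') => if b = b' then (k : ℝ) else 0
  | Sum.inr (Sum.inl _), Sum.inr (Sum.inr _) => -1
  | Sum.inr (Sum.inr _), Sum.inl _ => 1
  | Sum.inr (Sum.inr _), Sum.inr (Sum.inl _) => 1
  | Sum.inr (Sum.inr _), Sum.inr (Sum.inr _) => 0

/-- Player 2's payoffs in the hardness game G'. -/
def hg2 (E : A → B → Bool) (k : ℕ) : Act A B → Act A B → ℝ
  | Sum.inl a, Sum.inl a' => if a = a' then (k : ℝ) else 0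
  | Sum.inl a, Sum.inr (Sum.inl b) => if E a b then 1 else 0
  | Sum.inl _, Sum.inr (Sum.inr _) => 1
  | Sum.inr (Sum.inl _), Sum.inl _ => 0
  | Sum.inr (Sum.inl b), Sum.inr (Sum.inl b') => if b = b' then -(k : ℝ) else 0
  | Sum.inr (Sum.inl _), Sum.inr (Sum.inr _) => 1
  | Sum.inr (Sum.inr _), Sum.inl _ => -1
  | Sum.inr (Sum.inr _), Sum.inr (Sum.inl _) => -1
  | Sum.inr (Sum.inr _), Sum.inr (Sum.inr _) => 0

/-- Expected utility in the hardness game under mixed strategies. -/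
def euH (u : Act A B → Act A B → ℝ) (σ1 σ2 : Act A B → ℝ) : ℝ :=
  ∑ v, ∑ w, σ1 v * σ2 w * u v w

/-- The uniform mixture over a subset A' ⊆ A of size k, as a mixed strategy. -/
def unifA (A B : Type*) [DecidableEq A] (A' : Finset A) (k : ℕ) : Act A B → ℝ
  | Sum.inl a => if a ∈ A' then (1 : ℝ) / k else 0
  | _ => 0

/-- The uniform mixture over a subset B' ⊆ B of size k, as a mixed strategy. -/
def unifB (A B : Type*) [DecidableEq B] (B' : Finset B) (k : ℕ) : Act A B → ℝ
  | Sum.inr (Sum.inl b) => if b ∈ B' then (1 : ℝ) / k else 0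
  | _ => 0

section Aux

variable {A B : Type*} [Fintype A] [Fintype B] [DecidableEq A] [DecidableEq B]

private lemma sum_act (f : Act A B → ℝ) :
    ∑ v, f v = (∑ a, f (Sum.inl a)) + ((∑ b, f (Sum.inr (Sum.inl b))) + f (Sum.inr (Sum.inr ()))) := by
  rw [Fintype.sum_sum_type, Fintype.sum_sum_type,
    Fintype.sum_unique (fun u => f (Sum.inr (Sum.inr u)))]

/-- Inner sum against unifB. -/
private lemma sum_unifB (B' : Finset B) (k : ℕ) (g : Act A B → ℝ) :
    ∑ w, unifB A B B' k w * g w = ∑ b ∈ B', (1 / (k:ℝ)) * g (Sum.inr (Sum.inl b)) := by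
  rw [sum_act]
  simp only [unifB, zero_mul, Finset.sum_const_zero, add_zero, zero_add, ite_mul]
  rw [← Finset.sum_filter]
  congr 1
  ext b
  simp

private lemma sum_unifA (A' : Finset A) (k : ℕ) (g : Act A B → ℝ) :
    ∑ v, unifA A B A' k v * g v = ∑ a ∈ A', (1 / (k:ℝ)) * g (Sum.inl a) := by
  rw [sum_act]
  simp only [unifA, zero_mul, Finset.sum_const_zero, add_zero, ite_mul]
  rw [← Finset.sum_filter]
  congr 1
  ext a
  simp

end Aux

/-- If A' ⊆ A and B' ⊆ B of size k induce a complete bipartite subgraph, then the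
    profile of uniform mixtures over A' and B' is a Nash equilibrium of G' with
    payoffs (1, 1). -/
theorem hardness_game_Kkk_equilibrium
    (E : A → B → Bool) (k : ℕ) (hk : 2 ≤ k)
    (A' : Finset A) (B' : Finset B) (hA : A'.card = k) (hB : B'.card = k)
    (hE : ∀ a ∈ A', ∀ b ∈ B', E a b) :
    unifA A B A' k ∈ stdSimplex ℝ (Act A B) ∧
    unifB A B B' k ∈ stdSimplex ℝ (Act A B) ∧
    (∀ τ1 ∈ stdSimplex ℝ (Act A B),
      euH (hg1 E k) τ1 (unifB A B B' k) ≤ euH (hg1 E k) (unifA A B A' k) (unifB A B B' k)) ∧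
    (∀ τ2 ∈ stdSimplex ℝ (Act A B),
      euH (hg2 E k) (unifA A B A' k) τ2 ≤ euH (hg2 E k) (unifA A B A' k) (unifB A B B' k)) ∧
    euH (hg1 E k) (unifA A B A' k) (unifB A B B' k) = 1 ∧
    euH (hg2 E k) (unifA A B A' k) (unifB A B B' k) = 1 := by
  have hk0 : (0:ℝ) < k := by
    have h : 0 < k := lt_of_lt_of_le (by norm_num) hk
    exact_mod_cast h
  have hkne : (k:ℝ) ≠ 0 := ne_of_gt hk0
  have hinv : (0:ℝ) ≤ 1 / k := by positivity
  have euH_eq : ∀ (u : Act A B → Act A B → ℝ) (σ1 σ2 : Act A B → ℝ),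
      euH u σ1 σ2 = ∑ v, σ1 v * ∑ w, σ2 w * u v w := by
    intro u σ1 σ2
    unfold euH
    refine Finset.sum_congr rfl fun v _ => ?_
    rw [Finset.mul_sum]
    exact Finset.sum_congr rfl fun w _ => by ring
  have euH_eq' : ∀ (u : Act A B → Act A B → ℝ) (σ1 σ2 : Act A B → ℝ),
      euH u σ1 σ2 = ∑ w, σ2 w * ∑ v, σ1 v * u v w := by
    intro u σ1 σ2
    unfold euH
    rw [Finset.sum_comm]
    refine Finset.sum_congr rfl fun w _ => ?_
    rw [Finset.mul_sum]
    exact Finset.sum_congr rfl fun v _ => by ring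
  -- simplex memberships
  have hsA : unifA A B A' k ∈ stdSimplex ℝ (Act A B) := by
    constructor
    · intro v
      match v with
      | Sum.inl a =>
        simp only [unifA]
        split
        · exact hinv
        · exact le_rfl
      | Sum.inr (Sum.inl b) => exact le_refl 0
      | Sum.inr (Sum.inr u) => exact le_refl 0
    · have h := sum_unifA (B := B) A' k (fun _ => (1:ℝ))
      simp only [mul_one] at h
      rw [h, Finset.sum_const, hA, nsmul_eq_mul]
      field_simp
  have hsB : unifB A B B' k ∈ stdSimplex ℝ (Act A B) := by
    constructor
    · intro v
      match v with
      | Sum.inl a => exact le_refl 0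
      | Sum.inr (Sum.inl b) =>
        simp only [unifB]
        split
        · exact hinv
        · exact le_rfl
      | Sum.inr (Sum.inr u) => exact le_refl 0
    · have h := sum_unifB (A := A) B' k (fun _ => (1:ℝ))
      simp only [mul_one] at h
      rw [h, Finset.sum_const, hB, nsmul_eq_mul]
      field_simp
  -- payoff of each pure action of player 1 against unifB is ≤ 1
  have pay1 : ∀ v, ∑ w, unifB A B B' k w * hg1 E k v w ≤ 1 := by
    intro v
    rw [sum_unifB]
    match v with
    | Sum.inl a =>
      calc ∑ b ∈ B', (1/(k:ℝ)) * hg1 E k (Sum.inl a) (Sum.inr (Sum.inl b))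
          ≤ ∑ _b ∈ B', (1/(k:ℝ)) := by
            refine Finset.sum_le_sum fun b _ => ?_
            simp only [hg1]
            split <;> simp [hinv]
        _ = 1 := by rw [Finset.sum_const, hB, nsmul_eq_mul]; field_simp
    | Sum.inr (Sum.inl b0) =>
      simp only [hg1, mul_ite, mul_zero]
      rw [Finset.sum_ite_eq B' b0]
      split
      · rw [one_div, inv_mul_cancel₀ hkne]
      · norm_num
    | Sum.inr (Sum.inr u) =>
      simp only [hg1, mul_one]
      rw [Finset.sum_const, hB, nsmul_eq_mul]
      field_simp
      exact le_rfl
  have pay1_eq : ∀ a ∈ A', ∑ w, unifB A B B' k w * hg1 E k (Sum.inl a) w = 1 := by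
    intro a ha
    rw [sum_unifB]
    calc ∑ b ∈ B', (1/(k:ℝ)) * hg1 E k (Sum.inl a) (Sum.inr (Sum.inl b))
        = ∑ _b ∈ B', (1/(k:ℝ)) :=
          Finset.sum_congr rfl fun b hb => by simp [hg1, hE a ha b hb]
      _ = 1 := by rw [Finset.sum_const, hB, nsmul_eq_mul]; field_simp
  -- payoff of each pure action of player 2 against unifA is ≤ 1
  have pay2 : ∀ w, ∑ v, unifA A B A' k v * hg2 E k v w ≤ 1 := by
    intro w
    rw [sum_unifA]
    match w with
    | Sum.inl a0 =>
      simp only [hg2, mul_ite, mul_zero]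
      rw [Finset.sum_ite_eq' A' a0]
      split
      · rw [one_div, inv_mul_cancel₀ hkne]
      · norm_num
    | Sum.inr (Sum.inl b) =>
      calc ∑ a ∈ A', (1/(k:ℝ)) * hg2 E k (Sum.inl a) (Sum.inr (Sum.inl b))
          ≤ ∑ _a ∈ A', (1/(k:ℝ)) := by
            refine Finset.sum_le_sum fun a _ => ?_
            simp only [hg2]
            split <;> simp [hinv]
        _ = 1 := by rw [Finset.sum_const, hA, nsmul_eq_mul]; field_simp
    | Sum.inr (Sum.inr u) =>
      simp only [hg2, mul_one]
      rw [Finset.sum_const, hA, nsmul_eq_mul]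
      field_simp
      exact le_rfl
  have pay2_eq : ∀ b ∈ B', ∑ v, unifA A B A' k v * hg2 E k v (Sum.inr (Sum.inl b)) = 1 := by
    intro b hb
    rw [sum_unifA]
    calc ∑ a ∈ A', (1/(k:ℝ)) * hg2 E k (Sum.inl a) (Sum.inr (Sum.inl b))
        = ∑ _a ∈ A', (1/(k:ℝ)) :=
          Finset.sum_congr rfl fun a ha => by simp [hg2, hE a ha b hb]
      _ = 1 := by rw [Finset.sum_const, hA, nsmul_eq_mul]; field_simp
  have val1 : euH (hg1 E k) (unifA A B A' k) (unifB A B B' k) = 1 := by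
    rw [euH_eq, sum_unifA]
    calc ∑ a ∈ A', (1/(k:ℝ)) * ∑ w, unifB A B B' k w * hg1 E k (Sum.inl a) w
        = ∑ _a ∈ A', (1/(k:ℝ)) :=
          Finset.sum_congr rfl fun a ha => by rw [pay1_eq a ha, mul_one]
      _ = 1 := by rw [Finset.sum_const, hA, nsmul_eq_mul]; field_simp
  have val2 : euH (hg2 E k) (unifA A B A' k) (unifB A B B' k) = 1 := by
    rw [euH_eq', sum_unifB]
    calc ∑ b ∈ B', (1/(k:ℝ)) * ∑ v, unifA A B A' k v * hg2 E k v (Sum.inr (Sum.inl b))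
        = ∑ _b ∈ B', (1/(k:ℝ)) :=
          Finset.sum_congr rfl fun b hb => by rw [pay2_eq b hb, mul_one]
      _ = 1 := by rw [Finset.sum_const, hB, nsmul_eq_mul]; field_simp
  refine ⟨hsA, hsB, ?_, ?_, val1, val2⟩
  · intro τ1 hτ
    obtain ⟨hpos, hsum⟩ := hτ
    rw [euH_eq, val1]
    calc ∑ v, τ1 v * ∑ w, unifB A B B' k w * hg1 E k v w
        ≤ ∑ v, τ1 v * 1 :=
          Finset.sum_le_sum fun v _ => mul_le_mul_of_nonneg_left (pay1 v) (hpos v)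
      _ = 1 := by simp only [mul_one]; exact hsum
  · intro τ2 hτ
    obtain ⟨hpos, hsum⟩ := hτ
    rw [euH_eq', val2]
    calc ∑ w, τ2 w * ∑ v, unifA A B A' k v * hg2 E k v w
        ≤ ∑ w, τ2 w * 1 :=
          Finset.sum_le_sum fun w _ => mul_le_mul_of_nonneg_left (pay2 w) (hpos w)
      _ = 1 := by simp only [mul_one]; exact hsum
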